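/- Fix positive integers k and ℓ. For all complex numbers q and z with |q| < 1, (-zq;q)_∞ = 1 + ∑_{m=1}^{∞} ∑_{i=0}^{ℓ-1} ((-zq;q)_{km}/(q;q)_{ℓm-i}) z^{ℓm-i} q^{(ℓm-i)((2k+ℓ)m-i+1)/2} + ∑_{m=1}^{∞} ∑_{j=0}^{k-1} ((-zq;q)_{km-j-1}/(q;q)_{ℓm-ℓ}) z^{ℓm-ℓ+1} q^{(ℓm-ℓ+1)((2k+ℓ)m-2j-ℓ)/2}. -/

import Mathlib

open Finset Filter Topology

set_option maxHeartbeats 1000000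

namespace KLRank

variable (q z : ℂ)

noncomputable def P (n : ℕ) : ℂ := ∏ a ∈ Finset.range n, (1 + z * q ^ (a + 1))
noncomputable def Q (n : ℕ) : ℂ := ∏ a ∈ Finset.range n, (1 - q ^ (a + 1))
noncomputable def t (c n : ℕ) : ℂ := z ^ n * q ^ (c * n + n * (n + 1) / 2) / Q q n
noncomputable def w (c n : ℕ) : ℂ :=
  z ^ (n + 1) * q ^ (c * (n + 1) + (n + 1) * (n + 2) / 2) / Q q n

lemma tri_succ (m : ℕ) : (m + 1) * (m + 2) / 2 = m * (m + 1) / 2 + (m + 1) := by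
  obtain ⟨c, hc⟩ := Nat.even_mul_succ_self m
  have h2 : (m + 1) * (m + 2) = m * (m + 1) + 2 * (m + 1) := by ring
  rw [h2, hc]
  omega

lemma expo (c n : ℕ) : c * n + n * (n + 1) / 2 = n * (2 * c + n + 1) / 2 := by
  obtain ⟨d, hd⟩ := Nat.even_mul_succ_self n
  have h2 : n * (2 * c + n + 1) = 2 * (c * n) + n * (n + 1) := by ring
  rw [h2, hd]
  omega

lemma expo_succ (c m : ℕ) :
    c * (m + 1) + (m + 1) * (m + 2) / 2 = (c * m + m * (m + 1) / 2) + (c + m + 1) := by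
  rw [tri_succ m]; ring

variable {q z : ℂ}

lemma abs_pow_lt (hq : ‖q‖ < 1) (n : ℕ) : ‖q ^ (n + 1)‖ < 1 := by
  rw [norm_pow]
  calc ‖q‖ ^ (n + 1) ≤ ‖q‖ ^ 1 :=
        pow_le_pow_of_le_one (norm_nonneg q) hq.le (by omega)
    _ < 1 := by simpa using hq

lemma one_sub_ne (hq : ‖q‖ < 1) (n : ℕ) : 1 - q ^ (n + 1) ≠ 0 := by
  intro h
  have h1 : q ^ (n + 1) = 1 := by linear_combination -h
  have h2 := abs_pow_lt hq n
  rw [h1] at h2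
  simp at h2

lemma Q_ne (hq : ‖q‖ < 1) (n : ℕ) : Q q n ≠ 0 :=
  Finset.prod_ne_zero_iff.2 fun a _ => one_sub_ne hq a

lemma Q_succ (n : ℕ) : Q q (n + 1) = Q q n * (1 - q ^ (n + 1)) :=
  Finset.prod_range_succ _ _

lemma P_succ (n : ℕ) : P q z (n + 1) = P q z n * (1 + z * q ^ (n + 1)) :=
  Finset.prod_range_succ _ _

lemma t_zero (c : ℕ) : t q z c 0 = 1 := by simp [t, Q]

lemma w_zero (c : ℕ) : w q z c 0 = z * q ^ (c + 1) := by
  simp [w, Q]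

lemma t_mul_one_sub (hq : ‖q‖ < 1) (c n : ℕ) :
    t q z c (n + 1) * (1 - q ^ (n + 1)) = w q z c n := by
  have h12 : n + 1 + 1 = n + 2 := rfl
  rw [t, w, Q_succ, h12, ← div_div, div_mul_cancel₀ _ (one_sub_ne hq n)]

lemma t_mul_z (hq : ‖q‖ < 1) (c n : ℕ) :
    t q z c (n + 1) * (z * q ^ (n + c + 2)) = w q z c (n + 1) := by
  rw [t, w, expo_succ c (n + 1), div_mul_eq_mul_div]
  congr 1
  rw [pow_add]
  ring_nf

lemma t_c_succ (c n : ℕ) : t q z (c + 1) n = t q z c n * q ^ n := by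
  rw [t, t]
  have he : (c + 1) * n + n * (n + 1) / 2 = (c * n + n * (n + 1) / 2) + n := by ring
  rw [he, pow_add, div_mul_eq_mul_div, mul_assoc]

lemma key_pointwise (hq : ‖q‖ < 1) (c n : ℕ) :
    w q z c n - w q z c (n + 1)
      = t q z c (n + 1) * (1 - q ^ (n + 1) - z * q ^ (n + c + 2)) := by
  have h3 := t_mul_one_sub (z := z) hq c n
  have h5 := t_mul_z (z := z) hq c n
  linear_combination -h3 + h5
lemma one_sub_sum_le_prod (f : ℕ → ℝ) (s : Finset ℕ)
    (h0 : ∀ a ∈ s, 0 ≤ f a) (h1 : ∀ a ∈ s, f a ≤ 1) :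
    1 - ∑ a ∈ s, f a ≤ ∏ a ∈ s, (1 - f a) := by
  induction s using Finset.cons_induction with
  | empty => simp
  | cons a s ha ih =>
    rw [Finset.prod_cons, Finset.sum_cons]
    have h0a := h0 a (Finset.mem_cons_self a s)
    have h1a := h1 a (Finset.mem_cons_self a s)
    have ih' := ih (fun b hb => h0 b (Finset.mem_cons_of_mem hb))
      (fun b hb => h1 b (Finset.mem_cons_of_mem hb))
    have hs0 : (0:ℝ) ≤ ∑ b ∈ s, f b :=
      Finset.sum_nonneg fun b hb => h0 b (Finset.mem_cons_of_mem hb)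
    nlinarith

lemma exists_Q_lb (hq : ‖q‖ < 1) :
    ∃ c : ℝ, 0 < c ∧ ∀ n, c ≤ ‖∏ a ∈ Finset.range n, (1 - q ^ (a + 1))‖ := by
  have hr0 : 0 ≤ ‖q‖ := norm_nonneg q
  have hgeo : Summable (fun a : ℕ => ‖q‖ ^ (a + 1)) := by
    have := (summable_geometric_of_lt_one hr0 hq).mul_left ‖q‖
    refine this.congr fun a => ?_
    rw [← pow_succ']
  have htail := tendsto_sum_nat_add (fun a => ‖q‖ ^ (a + 1))
  have hev : ∀ᶠ i in atTop, (∑' k : ℕ, ‖q‖ ^ (k + i + 1)) < 1/2 :=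
    htail.eventually (gt_mem_nhds (by norm_num : (0:ℝ) < 1/2))
  obtain ⟨N, hN⟩ := hev.exists
  have hfactor : ∀ a : ℕ, 0 < 1 - ‖q‖ ^ (a + 1) := by
    intro a
    have : ‖q‖ ^ (a + 1) < 1 := pow_lt_one₀ hr0 hq (by omega)
    linarith
  have hfle : ∀ a : ℕ, 1 - ‖q‖ ^ (a + 1) ≤ 1 := fun a => by
    nlinarith [pow_nonneg hr0 (a + 1)]
  have hRpos : ∀ n, (0:ℝ) < ∏ a ∈ Finset.range n, (1 - ‖q‖ ^ (a + 1)) := fun n =>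
    Finset.prod_pos fun a _ => hfactor a
  have hIpos : ∀ m n, (0:ℝ) < ∏ a ∈ Finset.Ico m n, (1 - ‖q‖ ^ (a + 1)) := fun m n =>
    Finset.prod_pos fun a _ => hfactor a
  have hRle : ∀ n, (∏ a ∈ Finset.range n, (1 - ‖q‖ ^ (a + 1)))
      ≤ ‖∏ a ∈ Finset.range n, (1 - q ^ (a + 1))‖ := by
    intro n
    rw [norm_prod]
    refine Finset.prod_le_prod (fun a _ => (hfactor a).le) fun a _ => ?_
    calc 1 - ‖q‖ ^ (a + 1) = ‖(1:ℂ)‖ - ‖q ^ (a + 1)‖ := by rw [norm_one, norm_pow]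
      _ ≤ ‖1 - q ^ (a + 1)‖ := norm_sub_norm_le _ _
  have hsplit : ∀ m n : ℕ, m ≤ n →
      (∏ a ∈ Finset.range n, (1 - ‖q‖ ^ (a + 1)))
        = (∏ a ∈ Finset.range m, (1 - ‖q‖ ^ (a + 1)))
          * ∏ a ∈ Finset.Ico m n, (1 - ‖q‖ ^ (a + 1)) :=
    fun m n h => (Finset.prod_range_mul_prod_Ico _ h).symm
  refine ⟨(∏ a ∈ Finset.range N, (1 - ‖q‖ ^ (a + 1))) / 2,
    div_pos (hRpos N) two_pos, fun n => ?_⟩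
  refine le_trans ?_ (hRle n)
  rcases le_total n N with h | h
  · have h1 : (∏ a ∈ Finset.range N, (1 - ‖q‖ ^ (a + 1)))
        ≤ ∏ a ∈ Finset.range n, (1 - ‖q‖ ^ (a + 1)) := by
      rw [hsplit n N h]
      have h2 : ∏ a ∈ Finset.Ico n N, (1 - ‖q‖ ^ (a + 1)) ≤ 1 :=
        Finset.prod_le_one (fun a _ => (hfactor a).le) (fun a _ => hfle a)
      nlinarith [hRpos n]
    linarith [hRpos N]
  · have hsum : ∑ a ∈ Finset.Ico N n, ‖q‖ ^ (a + 1) ≤ 1/2 := by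
      have h1 : ∑ a ∈ Finset.Ico N n, ‖q‖ ^ (a + 1)
          = ∑ i ∈ Finset.range (n - N), ‖q‖ ^ (i + N + 1) := by
        rw [Finset.sum_Ico_eq_sum_range]
        exact Finset.sum_congr rfl fun i _ => by rw [add_comm N i]
      rw [h1]
      have hsh : Summable (fun k : ℕ => ‖q‖ ^ (k + N + 1)) := by
        refine Summable.congr ((summable_nat_add_iff N).mpr hgeo) fun a => ?_
        simp [add_assoc, add_comm, add_left_comm]
      calc ∑ i ∈ Finset.range (n - N), ‖q‖ ^ (i + N + 1)
          ≤ ∑' k : ℕ, ‖q‖ ^ (k + N + 1) :=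
            Summable.sum_le_tsum _ (fun i _ => by positivity) hsh
        _ ≤ 1/2 := hN.le
    have hprod : 1 - ∑ a ∈ Finset.Ico N n, ‖q‖ ^ (a + 1)
        ≤ ∏ a ∈ Finset.Ico N n, (1 - ‖q‖ ^ (a + 1)) :=
      one_sub_sum_le_prod _ _ (fun a _ => by positivity) (fun a _ => by
        nlinarith [pow_nonneg hr0 (a + 1), hfactor a])
    rw [hsplit N n h]
    nlinarith [hRpos N]

lemma exists_P_ub (hq : ‖q‖ < 1) (z : ℂ) :
    ∃ B : ℝ, 0 < B ∧ ∀ n, ‖∏ a ∈ Finset.range n, (1 + z * q ^ (a + 1))‖ ≤ B := by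
  have hr0 : 0 ≤ ‖q‖ := norm_nonneg q
  have hgeo : Summable (fun a : ℕ => ‖q‖ ^ (a + 1)) := by
    have := (summable_geometric_of_lt_one hr0 hq).mul_left ‖q‖
    refine this.congr fun a => ?_
    rw [← pow_succ']
  set S : ℝ := ∑' a : ℕ, ‖q‖ ^ (a + 1) with hS
  refine ⟨Real.exp (‖z‖ * S), Real.exp_pos _, fun n => ?_⟩
  calc ‖∏ a ∈ Finset.range n, (1 + z * q ^ (a + 1))‖
      = ∏ a ∈ Finset.range n, ‖1 + z * q ^ (a + 1)‖ := norm_prod _ _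
    _ ≤ ∏ a ∈ Finset.range n, Real.exp (‖z‖ * ‖q‖ ^ (a + 1)) := by
        refine Finset.prod_le_prod (fun a _ => norm_nonneg _) fun a _ => ?_
        calc ‖1 + z * q ^ (a + 1)‖ ≤ 1 + ‖z‖ * ‖q‖ ^ (a + 1) := by
              refine le_trans (norm_add_le _ _) ?_
              rw [norm_one, norm_mul, norm_pow]
          _ ≤ Real.exp (‖z‖ * ‖q‖ ^ (a + 1)) := by
              have := Real.add_one_le_exp (‖z‖ * ‖q‖ ^ (a + 1))
              linarith
    _ = Real.exp (∑ a ∈ Finset.range n, ‖z‖ * ‖q‖ ^ (a + 1)) := (Real.exp_sum _ _).symm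
    _ ≤ Real.exp (‖z‖ * S) := by
        refine Real.exp_le_exp.2 ?_
        rw [← Finset.mul_sum]
        refine mul_le_mul_of_nonneg_left ?_ (norm_nonneg z)
        exact Summable.sum_le_tsum _ (fun i _ => by positivity) hgeo

noncomputable def g (q z : ℂ) (n : ℕ) : ℝ := ‖z‖ ^ n * ‖q‖ ^ (n * (n + 1) / 2)

lemma g_nonneg (q z : ℂ) (n : ℕ) : 0 ≤ g q z n := by
  rw [g]; positivity

lemma g_succ (q z : ℂ) (n : ℕ) :
    g q z (n + 1) = g q z n * (‖z‖ * ‖q‖ ^ (n + 1)) := by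
  rw [g, g, tri_succ, pow_add]; ring

lemma g_summable (hq : ‖q‖ < 1) : Summable (g q z) := by
  refine summable_of_ratio_norm_eventually_le (r := 1/2) (by norm_num) ?_
  have hten : Tendsto (fun n : ℕ => ‖z‖ * ‖q‖ ^ (n + 1)) atTop (𝓝 0) := by
    have h1 : Tendsto (fun n : ℕ => ‖q‖ ^ (n + 1)) atTop (𝓝 0) :=
      (tendsto_pow_atTop_nhds_zero_of_lt_one (norm_nonneg q) hq).comp
        (tendsto_add_atTop_nat 1)
    simpa using h1.const_mul ‖z‖
  filter_upwards [hten.eventually (gt_mem_nhds (by norm_num : (0:ℝ) < 1/2))] with n hn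
  rw [Real.norm_of_nonneg (g_nonneg q z (n + 1)), Real.norm_of_nonneg (g_nonneg q z n),
    g_succ]
  have h0 : 0 ≤ ‖z‖ * ‖q‖ ^ (n + 1) := by positivity
  nlinarith [g_nonneg q z n]

section withbounds

variable {cQ : ℝ}

lemma t_norm_le (hcQ : 0 < cQ) (hQlb : ∀ n, cQ ≤ ‖Q q n‖) (hq : ‖q‖ < 1) (c n : ℕ) : ‖t q z c n‖ ≤ g q z n / cQ := by
  rw [t, g, norm_div, norm_mul, norm_pow, norm_pow]
  refine div_le_div₀ (by positivity) ?_ hcQ (hQlb n)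
  refine mul_le_mul_of_nonneg_left ?_ (by positivity)
  exact pow_le_pow_of_le_one (norm_nonneg q) hq.le (by omega)

lemma t_norm_le' (hcQ : 0 < cQ) (hQlb : ∀ n, cQ ≤ ‖Q q n‖) (hq : ‖q‖ < 1) (c n : ℕ) :
    ‖t q z c (n + 1)‖ ≤ ‖q‖ ^ c * g q z (n + 1) / cQ := by
  rw [t, g, norm_div, norm_mul, norm_pow, norm_pow]
  refine div_le_div₀ (by positivity) ?_ hcQ (hQlb (n + 1))
  rw [mul_comm (‖q‖ ^ c), mul_assoc]
  refine mul_le_mul_of_nonneg_left ?_ (by positivity)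
  rw [← pow_add]
  refine pow_le_pow_of_le_one (norm_nonneg q) hq.le ?_
  have : c ≤ c * (n + 1) := Nat.le_mul_of_pos_right c (by omega)
  omega

lemma t_summable (hcQ : 0 < cQ) (hQlb : ∀ n, cQ ≤ ‖Q q n‖) (hq : ‖q‖ < 1) (c : ℕ) : Summable (t q z c) := by
  refine Summable.of_norm_bounded (g := fun n => g q z n / cQ)
    ((g_summable hq).div_const cQ) ?_
  exact t_norm_le hcQ hQlb hq c

lemma w_norm_le (hcQ : 0 < cQ) (hQlb : ∀ n, cQ ≤ ‖Q q n‖) (hq : ‖q‖ < 1) (c n : ℕ) : ‖w q z c n‖ ≤ 2 * g q z (n + 1) / cQ := by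
  rw [← t_mul_one_sub hq c n, norm_mul]
  have h1 : ‖t q z c (n + 1)‖ ≤ g q z (n + 1) / cQ := t_norm_le hcQ hQlb hq c (n + 1)
  have h2 : ‖1 - q ^ (n + 1)‖ ≤ 2 := by
    refine le_trans (norm_sub_le _ _) ?_
    rw [norm_one, norm_pow]
    have : ‖q‖ ^ (n + 1) ≤ 1 := pow_le_one₀ (norm_nonneg q) hq.le
    linarith
  calc ‖t q z c (n + 1)‖ * ‖1 - q ^ (n + 1)‖ ≤ (g q z (n + 1) / cQ) * 2 := by
        refine mul_le_mul h1 h2 (norm_nonneg _) ?_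
        have := g_nonneg q z (n + 1)
        positivity
    _ = 2 * g q z (n + 1) / cQ := by ring

lemma w_norm_le' (hcQ : 0 < cQ) (hQlb : ∀ n, cQ ≤ ‖Q q n‖) (hq : ‖q‖ < 1) (c n : ℕ) :
    ‖w q z c n‖ ≤ 2 * (‖q‖ ^ c * g q z (n + 1)) / cQ := by
  rw [← t_mul_one_sub hq c n, norm_mul]
  have h1 := t_norm_le' (z := z) hcQ hQlb hq c n
  have h2 : ‖1 - q ^ (n + 1)‖ ≤ 2 := by
    refine le_trans (norm_sub_le _ _) ?_
    rw [norm_one, norm_pow]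
    have : ‖q‖ ^ (n + 1) ≤ 1 := pow_le_one₀ (norm_nonneg q) hq.le
    linarith
  calc ‖t q z c (n + 1)‖ * ‖1 - q ^ (n + 1)‖
      ≤ (‖q‖ ^ c * g q z (n + 1) / cQ) * 2 := by
        refine mul_le_mul h1 h2 (norm_nonneg _) ?_
        have := g_nonneg q z (n + 1)
        positivity
    _ = 2 * (‖q‖ ^ c * g q z (n + 1)) / cQ := by ring

lemma w_summable (hcQ : 0 < cQ) (hQlb : ∀ n, cQ ≤ ‖Q q n‖) (hq : ‖q‖ < 1) (c : ℕ) : Summable (w q z c) := by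
  refine Summable.of_norm_bounded (g := fun n => 2 * g q z (n + 1) / cQ) ?_
    (w_norm_le hcQ hQlb hq c)
  exact (((summable_nat_add_iff 1).2 (g_summable hq)).mul_left 2).div_const cQ

lemma w_tendsto (hcQ : 0 < cQ) (hQlb : ∀ n, cQ ≤ ‖Q q n‖) (hq : ‖q‖ < 1) (c : ℕ) : Tendsto (w q z c) atTop (𝓝 0) :=
  (w_summable hcQ hQlb hq c).tendsto_atTop_zero

lemma telescope (hcQ : 0 < cQ) (hQlb : ∀ n, cQ ≤ ‖Q q n‖) (hq : ‖q‖ < 1) (c M : ℕ) :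
    HasSum (fun n => w q z c (M + n) - w q z c (M + n + 1)) (w q z c M) := by
  have hw := w_summable hcQ hQlb hq (z := z) c
  have hf : Summable (fun n => w q z c (M + n)) :=
    ((summable_nat_add_iff M).2 hw).congr fun n => by rw [add_comm]
  have hf1 : Summable (fun n => w q z c (M + n + 1)) :=
    ((summable_nat_add_iff (M + 1)).2 hw).congr fun n => by
      congr 1; omega
  have hsub := hf.sub hf1
  rw [hasSum_iff_tendsto_nat_of_summable_norm (summable_norm_iff.mpr hsub)]
  have hps : ∀ N : ℕ, ∑ i ∈ Finset.range N, (w q z c (M + i) - w q z c (M + i + 1))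
      = w q z c M - w q z c (M + N) := by
    intro N
    have := Finset.sum_range_sub' (fun i => w q z c (M + i)) N
    simpa [add_assoc] using this
  simp only [hps]
  have hcomp : Tendsto (fun N : ℕ => M + N) atTop atTop :=
    tendsto_atTop_mono (fun n => Nat.le_add_left n M) tendsto_id
  have hlim := ((w_tendsto hcQ hQlb hq (z := z) c).comp hcomp)
  have hfin : Tendsto (fun N : ℕ => w q z c M - (w q z c ∘ fun N => M + N) N) atTop
      (𝓝 (w q z c M - 0)) := tendsto_const_nhds.sub hlim
  simpa [Function.comp] using hfin

lemma step_c (hcQ : 0 < cQ) (hQlb : ∀ n, cQ ≤ ‖Q q n‖) (hq : ‖q‖ < 1) (c M : ℕ) :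
    P q z (c + 1) * ∑' n, t q z (c + 1) (M + 1 + n)
      = P q z c * ∑' n, t q z c (M + 1 + n) - P q z c * w q z c M := by
  have hshift : ∀ c' : ℕ, Summable (fun n => t q z c' (M + 1 + n)) := fun c' =>
    ((summable_nat_add_iff (M + 1)).2 (t_summable hcQ hQlb hq c')).congr fun n => by
      rw [add_comm]
  have hsA := hshift c
  have hsA' := hshift (c + 1)
  have hpt : ∀ n, t q z c (M + 1 + n) - (1 + z * q ^ (c + 1)) * t q z (c + 1) (M + 1 + n)
      = w q z c (M + n) - w q z c (M + n + 1) := by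
    intro n
    have hidx : M + 1 + n = (M + n) + 1 := by omega
    rw [t_c_succ, hidx, key_pointwise hq c (M + n)]
    ring
  have h1 : HasSum (fun n => t q z c (M + 1 + n) - (1 + z * q ^ (c + 1)) * t q z (c + 1) (M + 1 + n))
      ((∑' n, t q z c (M + 1 + n)) - (1 + z * q ^ (c + 1)) * ∑' n, t q z (c + 1) (M + 1 + n)) :=
    hsA.hasSum.sub (hsA'.hasSum.mul_left _)
  have h2 : HasSum (fun n => t q z c (M + 1 + n) - (1 + z * q ^ (c + 1)) * t q z (c + 1) (M + 1 + n))
      (w q z c M) := by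
    simpa only [← hpt] using telescope hcQ hQlb hq (z := z) c M
  have heq := h1.unique h2
  rw [P_succ]
  linear_combination (-(P q z c)) * heq

lemma iter_c (hcQ : 0 < cQ) (hQlb : ∀ n, cQ ≤ ‖Q q n‖) (hq : ‖q‖ < 1) (c M : ℕ) : ∀ N : ℕ,
    P q z (c + N) * ∑' n, t q z (c + N) (M + 1 + n)
      = P q z c * ∑' n, t q z c (M + 1 + n)
        - ∑ j ∈ Finset.range N, P q z (c + j) * w q z (c + j) M := by
  intro N
  induction N with
  | zero => simp
  | succ N ih =>
    have hca : c + (N + 1) = (c + N) + 1 := by omega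
    rw [hca, step_c hcQ hQlb hq (c + N) M, ih, Finset.sum_range_succ]
    ring



lemma full_step (hcQ : 0 < cQ) (hQlb : ∀ n, cQ ≤ ‖Q q n‖) (hq : ‖q‖ < 1) (c : ℕ) :
    P q z (c + 1) * ∑' n, t q z (c + 1) n = P q z c * ∑' n, t q z c n := by
  have hsA := t_summable hcQ hQlb hq (z := z) c
  have hsA' := t_summable hcQ hQlb hq (z := z) (c + 1)
  have h2' := telescope hcQ hQlb hq (z := z) c 0
  have hfe : (fun n => w q z c (0 + n) - w q z c (0 + n + 1))
      = fun n => t q z c (n + 1) - (1 + z * q ^ (c + 1)) * t q z (c + 1) (n + 1) := by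
    funext n
    rw [Nat.zero_add, t_c_succ, key_pointwise hq c n]
    ring
  rw [hfe] at h2'
  have h3 := (hasSum_nat_add_iff
    (f := fun n => t q z c n - (1 + z * q ^ (c + 1)) * t q z (c + 1) n) 1).1 h2'
  have h4 : HasSum (fun n => t q z c n - (1 + z * q ^ (c + 1)) * t q z (c + 1) n)
      ((∑' n, t q z c n) - (1 + z * q ^ (c + 1)) * ∑' n, t q z (c + 1) n) :=
    hsA.hasSum.sub (hsA'.hasSum.mul_left _)
  have h5 := h4.unique h3
  have h6 : w q z c 0 + ∑ i ∈ Finset.range 1,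
      (t q z c i - (1 + z * q ^ (c + 1)) * t q z (c + 1) i) = 0 := by
    rw [Finset.sum_range_one, t_zero, t_zero, w_zero]
    ring
  rw [P_succ]
  rw [h6] at h5
  linear_combination (-(P q z c)) * h5

lemma V_const (hcQ : 0 < cQ) (hQlb : ∀ n, cQ ≤ ‖Q q n‖) (hq : ‖q‖ < 1) (c : ℕ) :
    P q z c * ∑' n, t q z c n = ∑' n, t q z 0 n := by
  induction c with
  | zero => simp [P]
  | succ c ih => rw [full_step hcQ hQlb hq, ih]

lemma P_tendsto (hq : ‖q‖ < 1) (z : ℂ) :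
    Tendsto (fun c => P q z c) atTop (𝓝 (∏' i : ℕ, (1 + z * q ^ (i + 1)))) := by
  by_cases hzero : ∃ i : ℕ, 1 + z * q ^ (i + 1) = 0
  · obtain ⟨i0, hi0⟩ := hzero
    have h0 : HasProd (fun i : ℕ => 1 + z * q ^ (i + 1)) 0 := by
      rw [HasProd]
      refine Tendsto.congr' ?_ (tendsto_const_nhds (x := (0:ℂ)))
      filter_upwards [eventually_ge_atTop ({i0} : Finset ℕ)] with s hs
      exact (Finset.prod_eq_zero (hs (Finset.mem_singleton_self i0)) hi0).symm
    rw [h0.tprod_eq]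
    refine Tendsto.congr' ?_ (tendsto_const_nhds (x := (0:ℂ)))
    filter_upwards [eventually_ge_atTop (i0 + 1)] with c hc
    exact (Finset.prod_eq_zero (Finset.mem_range.mpr (by omega)) hi0).symm
  · push_neg at hzero
    have hlog : Summable (fun i : ℕ => Complex.log (1 + z * q ^ (i + 1))) := by
      have hgs : Summable (fun i : ℕ => (3/2 : ℝ) * (‖z‖ * ‖q‖ ^ (i + 1))) := by
        have := ((summable_geometric_of_lt_one (norm_nonneg q) hq).mul_left ‖q‖)
        have h2 : Summable (fun i : ℕ => ‖q‖ ^ (i + 1)) :=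
          this.congr fun i => by rw [← pow_succ']
        exact (h2.mul_left ‖z‖).mul_left (3/2)
      refine Summable.of_norm_bounded_eventually_nat hgs ?_
      have hten : Tendsto (fun i : ℕ => ‖z‖ * ‖q‖ ^ (i + 1)) atTop (𝓝 0) := by
        have h1 : Tendsto (fun i : ℕ => ‖q‖ ^ (i + 1)) atTop (𝓝 0) :=
          (tendsto_pow_atTop_nhds_zero_of_lt_one (norm_nonneg q) hq).comp
            (tendsto_add_atTop_nat 1)
        simpa using h1.const_mul ‖z‖
      filter_upwards [hten.eventually (ge_mem_nhds (by norm_num : (0:ℝ) < 1/2))] with i hi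
      have hz2 : ‖z * q ^ (i + 1)‖ ≤ 1/2 := by
        rw [norm_mul, norm_pow]
        exact hi
      have hlog1 := Complex.norm_log_one_add_half_le_self hz2
      rw [norm_mul, norm_pow] at hlog1
      exact hlog1
    have hmult : Multipliable (fun i : ℕ => 1 + z * q ^ (i + 1)) :=
      Complex.multipliable_of_summable_log hlog
    exact hmult.hasProd.tendsto_prod_nat

lemma tail_tendsto (hcQ : 0 < cQ) (hQlb : ∀ n, cQ ≤ ‖Q q n‖) (hq : ‖q‖ < 1) :
    Tendsto (fun c => ∑' n, t q z c (n + 1)) atTop (𝓝 0) := by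
  have hgs : Summable (fun n : ℕ => g q z (n + 1)) :=
    (summable_nat_add_iff 1).2 (g_summable hq)
  set K : ℝ := (∑' n, g q z (n + 1)) / cQ with hK
  refine squeeze_zero_norm (a := fun c => ‖q‖ ^ c * K) ?_ ?_
  · intro c
    have hsn : Summable (fun n => ‖t q z c (n + 1)‖) := by
      refine Summable.of_nonneg_of_le (fun n => norm_nonneg _)
        (fun n => t_norm_le' hcQ hQlb hq c n) ?_
      exact ((hgs.mul_left (‖q‖ ^ c)).div_const cQ)
    calc ‖∑' n, t q z c (n + 1)‖ ≤ ∑' n, ‖t q z c (n + 1)‖ := norm_tsum_le_tsum_norm hsn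
      _ ≤ ∑' n, ‖q‖ ^ c * g q z (n + 1) / cQ := by
          refine Summable.tsum_le_tsum (fun n => t_norm_le' hcQ hQlb hq c n) hsn ?_
          exact ((hgs.mul_left (‖q‖ ^ c)).div_const cQ)
      _ = ∑' n, (‖q‖ ^ c / cQ) * g q z (n + 1) := tsum_congr fun n => by ring
      _ = (‖q‖ ^ c / cQ) * ∑' n, g q z (n + 1) := tsum_mul_left
      _ = ‖q‖ ^ c * K := by rw [hK]; ring
  · have h1 : Tendsto (fun c : ℕ => ‖q‖ ^ c) atTop (𝓝 0) :=
      tendsto_pow_atTop_nhds_zero_of_lt_one (norm_nonneg q) hq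
    simpa using h1.mul_const K

lemma euler (hcQ : 0 < cQ) (hQlb : ∀ n, cQ ≤ ‖Q q n‖) (hq : ‖q‖ < 1) :
    ∑' n, t q z 0 n = ∏' i : ℕ, (1 + z * q ^ (i + 1)) := by
  have hsplit : ∀ c : ℕ, ∑' n, t q z c n = 1 + ∑' n, t q z c (n + 1) := by
    intro c
    rw [Summable.tsum_eq_zero_add (t_summable hcQ hQlb hq (z := z) c), t_zero]
  have hTend : Tendsto (fun c => P q z c * (1 + ∑' n, t q z c (n + 1))) atTop
      (𝓝 ((∏' i : ℕ, (1 + z * q ^ (i + 1))) * (1 + 0))) :=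
    (P_tendsto hq z).mul (tendsto_const_nhds.add (tail_tendsto hcQ hQlb hq))
  have hconst : (fun c => P q z c * (1 + ∑' n, t q z c (n + 1)))
      = fun _ => ∑' n, t q z 0 n := by
    funext c
    rw [← hsplit c, V_const hcQ hQlb hq c]
  rw [hconst] at hTend
  have := tendsto_nhds_unique tendsto_const_nhds hTend
  simpa using this

lemma shift_summable (hcQ : 0 < cQ) (hQlb : ∀ n, cQ ≤ ‖Q q n‖) (hq : ‖q‖ < 1) (c N : ℕ) :
    Summable (fun n => t q z c (N + n)) :=
  ((summable_nat_add_iff N).2 (t_summable hcQ hQlb hq c)).congr fun n => by rw [add_comm]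

lemma block_split (hcQ : 0 < cQ) (hQlb : ∀ n, cQ ≤ ‖Q q n‖) (hq : ‖q‖ < 1) (c M L : ℕ) :
    (∑' n, t q z c (M + 1 + n))
      = (∑ i ∈ Finset.range L, t q z c (M + 1 + i)) + ∑' n, t q z c (M + L + 1 + n) := by
  have h := Summable.sum_add_tsum_nat_add (f := fun n => t q z c (M + 1 + n)) L
    (shift_summable hcQ hQlb hq c (M + 1))
  rw [← h]
  congr 1
  refine tsum_congr fun n => ?_
  show t q z c (M + 1 + (n + L)) = t q z c (M + L + 1 + n)
  rw [show M + 1 + (n + L) = M + L + 1 + n from by omega]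

lemma tail_norm_le (hcQ : 0 < cQ) (hQlb : ∀ n, cQ ≤ ‖Q q n‖) (hq : ‖q‖ < 1) (c N : ℕ) :
    ‖∑' n, t q z c (N + n)‖ ≤ (∑' n, g q z (n + N)) / cQ := by
  have hgN : Summable (fun n => g q z (n + N)) := (summable_nat_add_iff N).2 (g_summable hq)
  have hbound : ∀ n, ‖t q z c (N + n)‖ ≤ g q z (n + N) / cQ := fun n => by
    calc ‖t q z c (N + n)‖ ≤ g q z (N + n) / cQ := t_norm_le hcQ hQlb hq (z := z) c (N + n)
      _ = g q z (n + N) / cQ := by rw [add_comm N n]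
  have hsn : Summable (fun n => ‖t q z c (N + n)‖) :=
    Summable.of_nonneg_of_le (fun n => norm_nonneg _) hbound (hgN.div_const cQ)
  calc ‖∑' n, t q z c (N + n)‖ ≤ ∑' n, ‖t q z c (N + n)‖ := norm_tsum_le_tsum_norm hsn
    _ ≤ ∑' n, g q z (n + N) / cQ := Summable.tsum_le_tsum hbound hsn (hgN.div_const cQ)
    _ = (∑' n, g q z (n + N)) / cQ := tsum_div_const

lemma expo_t (c n e : ℕ) (h : 2 * c + n + 1 = e) :
    c * n + n * (n + 1) / 2 = n * e / 2 := by rw [expo, h]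

lemma expo_w (c M e : ℕ) (h : 2 * c + M + 2 = e) :
    c * (M + 1) + (M + 1) * (M + 2) / 2 = (M + 1) * e / 2 := by
  have h2 : c * (M + 1) + (M + 1) * (M + 2) / 2
      = c * (M + 1) + (M + 1) * ((M + 1) + 1) / 2 := rfl
  rw [h2, expo c (M + 1)]
  rw [show 2 * c + (M + 1) + 1 = e from by omega]

end withbounds

end KLRank

/-- The `(k,ℓ)`-rank identity (Theorem 3.6): for `|q| < 1`,
`(-zq;q)_∞ = 1
  + ∑_{m=1}^∞ ∑_{i=0}^{ℓ-1} ((-zq;q)_{km}/(q;q)_{ℓm-i}) z^{ℓm-i} q^{(ℓm-i)((2k+ℓ)m-i+1)/2}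
  + ∑_{m=1}^∞ ∑_{j=0}^{k-1} ((-zq;q)_{km-j-1}/(q;q)_{ℓm-ℓ}) z^{ℓm-ℓ+1} q^{(ℓm-ℓ+1)((2k+ℓ)m-2j-ℓ)/2}`.
(The outer series index is shifted: `m + 1` plays the role of `m ≥ 1`.) -/
theorem kl_rank_identity (k l : ℕ) (hk : 0 < k) (hl : 0 < l)
    (q z : ℂ) (hq : ‖q‖ < 1) :
    (∏' i : ℕ, (1 + z * q ^ (i + 1))) =
      1 +
      (∑' m : ℕ, ∑ i ∈ Finset.range l,
        ((∏ a ∈ Finset.range (k * (m + 1)), (1 + z * q ^ (a + 1))) /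
            (∏ a ∈ Finset.range (l * (m + 1) - i), (1 - q ^ (a + 1)))) *
          z ^ (l * (m + 1) - i) *
          q ^ ((l * (m + 1) - i) * ((2 * k + l) * (m + 1) - i + 1) / 2)) +
      (∑' m : ℕ, ∑ j ∈ Finset.range k,
        ((∏ a ∈ Finset.range (k * (m + 1) - j - 1), (1 + z * q ^ (a + 1))) /
            (∏ a ∈ Finset.range (l * (m + 1) - l), (1 - q ^ (a + 1)))) *
          z ^ (l * (m + 1) - l + 1) *
          q ^ ((l * (m + 1) - l + 1) * ((2 * k + l) * (m + 1) - 2 * j - l) / 2)) := by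
  have hq' : ‖q‖ < 1 := by exact hq
  obtain ⟨cQ, hcQ, hQlb0⟩ := KLRank.exists_Q_lb hq'
  have hQlb : ∀ n, cQ ≤ ‖KLRank.Q q n‖ := fun n => hQlb0 n
  obtain ⟨B0, hB0, hPub0⟩ := KLRank.exists_P_ub hq' z
  have hPub : ∀ n, ‖KLRank.P q z n‖ ≤ B0 := fun n => hPub0 n
  have hgs := KLRank.g_summable (z := z) hq'
  set Amap : ℕ → ℂ := fun m => ∑ i ∈ Finset.range l,
    KLRank.P q z (k * (m + 1)) * KLRank.t q z (k * (m + 1)) (l * (m + 1) - i) with hAmap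
  set Bmap : ℕ → ℂ := fun m => ∑ j ∈ Finset.range k,
    KLRank.P q z (k * (m + 1) - j - 1) * KLRank.w q z (k * (m + 1) - j - 1) (l * m) with hBmap
  set TT : ℕ → ℂ := fun m =>
    KLRank.P q z (k * m) * ∑' n, KLRank.t q z (k * m) (l * m + 1 + n) with hTT
  -- (I) statement inner sums equal Amap/Bmap
  have hAstat : ∀ m : ℕ, (∑ i ∈ Finset.range l,
      ((∏ a ∈ Finset.range (k * (m + 1)), (1 + z * q ^ (a + 1))) /
          (∏ a ∈ Finset.range (l * (m + 1) - i), (1 - q ^ (a + 1)))) *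
        z ^ (l * (m + 1) - i) *
        q ^ ((l * (m + 1) - i) * ((2 * k + l) * (m + 1) - i + 1) / 2)) = Amap m := by
    intro m
    simp only [hAmap]
    refine Finset.sum_congr rfl fun i hi => ?_
    have hil : i < l := Finset.mem_range.1 hi
    have hll : l * (m + 1) = l * m + l := by ring
    have hkk : (2 * k + l) * (m + 1) = 2 * (k * (m + 1)) + l * (m + 1) := by ring
    have he : 2 * (k * (m + 1)) + (l * (m + 1) - i) + 1 = (2 * k + l) * (m + 1) - i + 1 := by
      omega
    simp only [KLRank.t, KLRank.P, KLRank.Q]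
    rw [KLRank.expo_t _ _ _ he]
    ring
  have hBstat : ∀ m : ℕ, (∑ j ∈ Finset.range k,
      ((∏ a ∈ Finset.range (k * (m + 1) - j - 1), (1 + z * q ^ (a + 1))) /
          (∏ a ∈ Finset.range (l * (m + 1) - l), (1 - q ^ (a + 1)))) *
        z ^ (l * (m + 1) - l + 1) *
        q ^ ((l * (m + 1) - l + 1) * ((2 * k + l) * (m + 1) - 2 * j - l) / 2)) = Bmap m := by
    intro m
    simp only [hBmap]
    refine Finset.sum_congr rfl fun j hj => ?_
    have hjk : j < k := Finset.mem_range.1 hj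
    have hll : l * (m + 1) = l * m + l := by ring
    have hkk : k * (m + 1) = k * m + k := by ring
    have h2k : (2 * k + l) * (m + 1) = 2 * (k * (m + 1)) + l * (m + 1) := by ring
    have hlm : l * (m + 1) - l = l * m := by omega
    rw [hlm]
    have he : 2 * (k * (m + 1) - j - 1) + l * m + 2 = (2 * k + l) * (m + 1) - 2 * j - l := by
      omega
    simp only [KLRank.w, KLRank.P, KLRank.Q]
    rw [KLRank.expo_w _ _ _ he]
    ring
  -- reflected forms
  have hArefl : ∀ m : ℕ, Amap m = ∑ i ∈ Finset.range l,
      KLRank.P q z (k * (m + 1)) * KLRank.t q z (k * (m + 1)) (l * m + 1 + i) := by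
    intro m
    simp only [hAmap]
    rw [← Finset.sum_range_reflect
      (fun i => KLRank.P q z (k * (m + 1)) * KLRank.t q z (k * (m + 1)) (l * m + 1 + i)) l]
    refine Finset.sum_congr rfl fun i hi => ?_
    have hil : i < l := Finset.mem_range.1 hi
    have hll : l * (m + 1) = l * m + l := by ring
    rw [show l * (m + 1) - i = l * m + 1 + (l - 1 - i) from by omega]
  have hBrefl : ∀ m : ℕ, Bmap m = ∑ j ∈ Finset.range k,
      KLRank.P q z (k * m + j) * KLRank.w q z (k * m + j) (l * m) := by
    intro m
    simp only [hBmap]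
    rw [← Finset.sum_range_reflect
      (fun j => KLRank.P q z (k * m + j) * KLRank.w q z (k * m + j) (l * m)) k]
    refine Finset.sum_congr rfl fun j hj => ?_
    have hjk : j < k := Finset.mem_range.1 hj
    have hkk : k * (m + 1) = k * m + k := by ring
    rw [show k * (m + 1) - j - 1 = k * m + (k - 1 - j) from by omega]
  -- (II) telescoping
  have hD : ∀ m : ℕ, TT m - TT (m + 1) = Amap m + Bmap m := by
    intro m
    have hiter := KLRank.iter_c hcQ hQlb hq' (z := z) (k * m) (l * m) k
    rw [show k * m + k = k * (m + 1) from by ring] at hiter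
    have hblock := KLRank.block_split hcQ hQlb hq' (z := z) (k * (m + 1)) (l * m) l
    rw [show l * m + l = l * (m + 1) from by ring] at hblock
    simp only [hTT]
    rw [hArefl m, hBrefl m, ← Finset.mul_sum]
    linear_combination -hiter + KLRank.P q z (k * (m + 1)) * hblock
  -- (III) summability
  have hSB : Summable Bmap := by
    have hinj : Function.Injective (fun m : ℕ => l * m + 1) := by
      intro a b hab
      simp only at hab
      have h1 : l * a = l * b := by omega
      exact Nat.eq_of_mul_eq_mul_left hl h1
    have hgl : Summable (fun m => KLRank.g q z (l * m + 1)) := hgs.comp_injective hinj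
    refine Summable.of_norm_bounded
      (g := fun m => ((k : ℝ) * B0 * 2 / cQ) * KLRank.g q z (l * m + 1)) (hgl.mul_left _) ?_
    intro m
    rw [hBrefl m]
    calc ‖∑ j ∈ Finset.range k, KLRank.P q z (k * m + j) * KLRank.w q z (k * m + j) (l * m)‖
        ≤ ∑ j ∈ Finset.range k, ‖KLRank.P q z (k * m + j) * KLRank.w q z (k * m + j) (l * m)‖ :=
          norm_sum_le _ _
      _ ≤ ∑ _j ∈ Finset.range k, B0 * (2 * KLRank.g q z (l * m + 1) / cQ) := by
          refine Finset.sum_le_sum fun j _ => ?_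
          rw [norm_mul]
          exact mul_le_mul (hPub _) (KLRank.w_norm_le hcQ hQlb hq' _ _) (norm_nonneg _) hB0.le
      _ = ((k : ℝ) * B0 * 2 / cQ) * KLRank.g q z (l * m + 1) := by
          rw [Finset.sum_const, Finset.card_range, nsmul_eq_mul]
          ring
  have hSA : Summable Amap := by
    have hgs1 : Summable (fun n => KLRank.g q z (n + 1)) := (summable_nat_add_iff 1).2 hgs
    have hsumA : Summable (fun m => ∑ i ∈ Finset.range l, KLRank.g q z (l * (m + 1) - i)) := by
      refine summable_of_sum_range_le (c := ∑' n, KLRank.g q z (n + 1))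
        (fun m => Finset.sum_nonneg fun i _ => KLRank.g_nonneg q z _) ?_
      intro M
      have key : ∀ M' : ℕ, ∑ m ∈ Finset.range M', ∑ i ∈ Finset.range l,
          KLRank.g q z (l * (m + 1) - i)
          = ∑ n ∈ Finset.range (l * M'), KLRank.g q z (n + 1) := by
        intro M'
        induction M' with
        | zero => simp
        | succ M' ih =>
          rw [Finset.sum_range_succ, ih, show l * (M' + 1) = l * M' + l from by ring,
            Finset.sum_range_add]
          congr 1
          rw [← Finset.sum_range_reflect (fun i => KLRank.g q z (l * M' + i + 1)) l]
          refine Finset.sum_congr rfl fun i hi => ?_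
          have hil : i < l := Finset.mem_range.1 hi
          have hll : l * (M' + 1) = l * M' + l := by ring
          rw [show l * M' + l - i = l * M' + (l - 1 - i) + 1 from by omega]
      rw [key M]
      exact Summable.sum_le_tsum _ (fun n _ => KLRank.g_nonneg q z _) hgs1
    refine Summable.of_norm_bounded
      (g := fun m => (B0 / cQ) * ∑ i ∈ Finset.range l, KLRank.g q z (l * (m + 1) - i))
      (hsumA.mul_left _) ?_
    intro m
    simp only [hAmap]
    calc ‖∑ i ∈ Finset.range l,
          KLRank.P q z (k * (m + 1)) * KLRank.t q z (k * (m + 1)) (l * (m + 1) - i)‖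
        ≤ ∑ i ∈ Finset.range l,
          ‖KLRank.P q z (k * (m + 1)) * KLRank.t q z (k * (m + 1)) (l * (m + 1) - i)‖ :=
          norm_sum_le _ _
      _ ≤ ∑ i ∈ Finset.range l, B0 * (KLRank.g q z (l * (m + 1) - i) / cQ) := by
          refine Finset.sum_le_sum fun i _ => ?_
          rw [norm_mul]
          exact mul_le_mul (hPub _) (KLRank.t_norm_le hcQ hQlb hq' _ _) (norm_nonneg _) hB0.le
      _ = (B0 / cQ) * ∑ i ∈ Finset.range l, KLRank.g q z (l * (m + 1) - i) := by
          rw [Finset.mul_sum]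
          exact Finset.sum_congr rfl fun i _ => by ring
  -- (IV) TT → 0
  have hTTlim : Tendsto TT atTop (𝓝 0) := by
    have hcomp : Tendsto (fun m : ℕ => l * m + 1) atTop atTop := by
      refine tendsto_atTop_mono (fun m => ?_) tendsto_id
      have := Nat.le_mul_of_pos_left m hl
      simp only [id_eq]
      omega
    have htails := tendsto_sum_nat_add (KLRank.g q z)
    have hbnd : ∀ m, ‖TT m‖ ≤ B0 * ((∑' n, KLRank.g q z (n + (l * m + 1))) / cQ) := by
      intro m
      simp only [hTT]
      rw [norm_mul]
      exact mul_le_mul (hPub _) (KLRank.tail_norm_le hcQ hQlb hq' (z := z) (k * m) (l * m + 1))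
        (norm_nonneg _) hB0.le
    refine squeeze_zero_norm hbnd ?_
    have h1 : Tendsto (fun m : ℕ => (∑' n, KLRank.g q z (n + (l * m + 1)))) atTop (𝓝 0) :=
      htails.comp hcomp
    have h2 := (h1.div_const cQ).const_mul B0
    simpa using h2
  -- (V) HasSum
  have hHS : HasSum (fun m => Amap m + Bmap m) (TT 0) := by
    have hsub : Summable (fun m => Amap m + Bmap m) := hSA.add hSB
    rw [hasSum_iff_tendsto_nat_of_summable_norm (summable_norm_iff.mpr hsub)]
    have hps : ∀ M : ℕ, ∑ m ∈ Finset.range M, (Amap m + Bmap m) = TT 0 - TT M := by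
      intro M
      rw [Finset.sum_congr rfl (fun m _ => (hD m).symm), Finset.sum_range_sub' TT M]
    simp only [hps]
    simpa using (tendsto_const_nhds (x := TT 0)).sub hTTlim
  -- (VI) TT 0 = ∏' - 1
  have hT0 : TT 0 = (∏' i : ℕ, (1 + z * q ^ (i + 1))) - 1 := by
    have he := KLRank.euler hcQ hQlb hq' (z := z)
    have hsplit := Summable.tsum_eq_zero_add (KLRank.t_summable hcQ hQlb hq' (z := z) 0)
    rw [KLRank.t_zero] at hsplit
    simp only [hTT]
    rw [show k * 0 = 0 from by ring, show l * 0 = 0 from by ring]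
    have hP0 : KLRank.P q z 0 = 1 := by simp [KLRank.P]
    rw [hP0, one_mul]
    have hcg : (∑' n, KLRank.t q z 0 (0 + 1 + n)) = ∑' n, KLRank.t q z 0 (n + 1) :=
      tsum_congr fun n => by rw [show 0 + 1 + n = n + 1 from by omega]
    rw [hcg]
    linear_combination -hsplit + he
  -- conclude
  have h1 : (∑' m : ℕ, ∑ i ∈ Finset.range l,
      ((∏ a ∈ Finset.range (k * (m + 1)), (1 + z * q ^ (a + 1))) /
          (∏ a ∈ Finset.range (l * (m + 1) - i), (1 - q ^ (a + 1)))) *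
        z ^ (l * (m + 1) - i) *
        q ^ ((l * (m + 1) - i) * ((2 * k + l) * (m + 1) - i + 1) / 2)) = ∑' m, Amap m :=
    tsum_congr hAstat
  have h2 : (∑' m : ℕ, ∑ j ∈ Finset.range k,
      ((∏ a ∈ Finset.range (k * (m + 1) - j - 1), (1 + z * q ^ (a + 1))) /
          (∏ a ∈ Finset.range (l * (m + 1) - l), (1 - q ^ (a + 1)))) *
        z ^ (l * (m + 1) - l + 1) *
        q ^ ((l * (m + 1) - l + 1) * ((2 * k + l) * (m + 1) - 2 * j - l) / 2)) = ∑' m, Bmap m :=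
    tsum_congr hBstat
  rw [h1, h2]
  have h3 : (∑' m, Amap m) + ∑' m, Bmap m = TT 0 := by
    rw [← Summable.tsum_add hSA hSB]
    exact hHS.tsum_eq
  linear_combination -h3 - hT0
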